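/- arXiv:2001.09377 — 2 statements merged into one kernel-verified Lean document; each statement's English description precedes it below -/
import Mathlib

section
/- Let r, c, εr, εc ∈ ℝ^N with 0 ≤ r ≤ 1, 0 ≤ c ≤ 1, εr ≥ 0, εc ≥ 0 componentwise, A a matrix, and d ∈ ℝ. Let y₁ maximize rᵀy over D₁ = {y : Ay = 0, 1ᵀy = 1, y ≥ 0, cᵀy ≤ d} and let y₂ maximize (r+εr)ᵀy over D₂ = {y : Ay = 0, 1ᵀy = 1, y ≥ 0, (c+εc)ᵀy ≤ d}, both nonempty. If there exist y₀ ∈ D₂ and constants α, β > 0 with rᵀ(y₁ − y₀) = α and cᵀ(y₁ − y₀) = β, then rᵀ(y₁ − y₂) ≤ (2α/β)·‖εc‖₁ + ‖εr‖₁. -/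
open Matrix Finset

lemma dot_le_sum_aux {N : ℕ} (v y : Fin N → ℝ) (hv : ∀ j, 0 ≤ v j)
    (hy0 : ∀ j, 0 ≤ y j) (hys : (∑ j, y j) = 1) : v ⬝ᵥ y ≤ ∑ j, v j := by
  have hy1 : ∀ j, y j ≤ 1 := fun j => hys ▸
    Finset.single_le_sum (fun i _ => hy0 i) (Finset.mem_univ j)
  calc v ⬝ᵥ y = ∑ j, v j * y j := rfl
    _ ≤ ∑ j, v j * 1 := Finset.sum_le_sum fun j _ =>
        mul_le_mul_of_nonneg_left (hy1 j) (hv j)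
    _ = ∑ j, v j := by simp

/-- Robust LP perturbation lemma (Lemma 2): reward gap between the optimizer of the
nominal LP and the optimizer of the perturbed (optimistic/pessimistic) LP. -/
theorem robust_lp_perturbation
    {N M : ℕ} (r c εr εc : Fin N → ℝ) (A : Matrix (Fin M) (Fin N) ℝ) (d : ℝ)
    (hr0 : ∀ j, 0 ≤ r j) (hr1 : ∀ j, r j ≤ 1)
    (hc0 : ∀ j, 0 ≤ c j) (hc1 : ∀ j, c j ≤ 1)
    (hεr : ∀ j, 0 ≤ εr j) (hεc : ∀ j, 0 ≤ εc j)
    (D₁ : Set (Fin N → ℝ)) (D₂ : Set (Fin N → ℝ))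
    (hD₁ : D₁ = {y | A *ᵥ y = 0 ∧ (∑ j, y j) = 1 ∧ (∀ j, 0 ≤ y j) ∧ c ⬝ᵥ y ≤ d})
    (hD₂ : D₂ = {y | A *ᵥ y = 0 ∧ (∑ j, y j) = 1 ∧ (∀ j, 0 ≤ y j) ∧ (c + εc) ⬝ᵥ y ≤ d})
    (y₁ y₂ : Fin N → ℝ)
    (hy₁ : y₁ ∈ D₁) (hy₁max : ∀ y ∈ D₁, r ⬝ᵥ y ≤ r ⬝ᵥ y₁)
    (hy₂ : y₂ ∈ D₂) (hy₂max : ∀ y ∈ D₂, (r + εr) ⬝ᵥ y ≤ (r + εr) ⬝ᵥ y₂)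
    (y₀ : Fin N → ℝ) (hy₀ : y₀ ∈ D₂)
    (α β : ℝ) (hα : 0 < α) (hβ : 0 < β)
    (hrα : r ⬝ᵥ (y₁ - y₀) = α) (hcβ : c ⬝ᵥ (y₁ - y₀) = β) :
    r ⬝ᵥ (y₁ - y₂) ≤ (2 * α / β) * (∑ j, |εc j|) + ∑ j, |εr j| := by
  subst hD₁ hD₂
  obtain ⟨hA₁, hs₁, hn₁, hcd₁⟩ := hy₁
  obtain ⟨hA₂, hs₂, hn₂, hcd₂⟩ := hy₂
  obtain ⟨hA₀, hs₀, hn₀, hcd₀⟩ := hy₀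
  set e : ℝ := ∑ j, εc j with he_def
  have he0 : 0 ≤ e := Finset.sum_nonneg fun j _ => hεc j
  have heabs : (∑ j, |εc j|) = e := by
    simp only [he_def]; exact Finset.sum_congr rfl fun j _ => abs_of_nonneg (hεc j)
  have herabs : (∑ j, |εr j|) = ∑ j, εr j :=
    Finset.sum_congr rfl fun j _ => abs_of_nonneg (hεr j)
  set lam : ℝ := min 1 (e / β) with hlam_def
  have hl0 : 0 ≤ lam := le_min zero_le_one (div_nonneg he0 hβ.le)
  have hl1 : lam ≤ 1 := min_le_left _ _
  have hle : lam ≤ e / β := min_le_right _ _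
  set yl : Fin N → ℝ := (1 - lam) • y₁ + lam • y₀ with hyl_def
  -- dot product expansion
  have hdot : ∀ v : Fin N → ℝ, v ⬝ᵥ yl = (1 - lam) * (v ⬝ᵥ y₁) + lam * (v ⬝ᵥ y₀) := by
    intro v
    simp [hyl_def, dotProduct_add, dotProduct_smul, smul_eq_mul]
  have hr₀ : r ⬝ᵥ y₀ = r ⬝ᵥ y₁ - α := by
    have := hrα; rw [dotProduct_sub] at this; linarith
  have hc₀ : c ⬝ᵥ y₀ = c ⬝ᵥ y₁ - β := by
    have := hcβ; rw [dotProduct_sub] at this; linarith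
  -- yl is a probability vector
  have hnl : ∀ j, 0 ≤ yl j := fun j => by
    have := hn₁ j; have := hn₀ j
    simp only [hyl_def, Pi.add_apply, Pi.smul_apply, smul_eq_mul]
    nlinarith
  have hsl : (∑ j, yl j) = 1 := by
    simp only [hyl_def, Pi.add_apply, Pi.smul_apply, smul_eq_mul]
    rw [Finset.sum_add_distrib, ← Finset.mul_sum, ← Finset.mul_sum, hs₁, hs₀]; ring
  have hAl : A *ᵥ yl = 0 := by
    simp [hyl_def, Matrix.mulVec_add, Matrix.mulVec_smul, hA₁, hA₀]
  -- cost feasibility of yl in D₂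
  have hεcl : εc ⬝ᵥ yl ≤ e := dot_le_sum_aux εc yl hεc hnl hsl
  have hεc₂ : εc ⬝ᵥ y₂ ≤ e := dot_le_sum_aux εc y₂ hεc hn₂ hs₂
  have hεr₂ : εr ⬝ᵥ y₂ ≤ ∑ j, εr j := dot_le_sum_aux εr y₂ hεr hn₂ hs₂
  have hεrl : 0 ≤ εr ⬝ᵥ yl :=
    Finset.sum_nonneg fun j _ => mul_nonneg (hεr j) (hnl j)
  have hcdl : (c + εc) ⬝ᵥ yl ≤ d := by
    rcases le_or_gt e β with h | h
    · have hlam : lam = e / β := min_eq_right ((div_le_one hβ).mpr h)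
      have hlb : lam * β = e := by rw [hlam]; field_simp
      rw [add_dotProduct]
      have : c ⬝ᵥ yl = c ⬝ᵥ y₁ - lam * β := by rw [hdot, hc₀]; ring
      linarith
    · have hlam : lam = 1 := min_eq_left (le_of_lt ((one_lt_div hβ).mpr h))
      have : yl = y₀ := by simp [hyl_def, hlam]
      rw [this]; exact hcd₀
  have hyl₂ : (r + εr) ⬝ᵥ yl ≤ (r + εr) ⬝ᵥ y₂ := hy₂max yl ⟨hAl, hsl, hnl, hcdl⟩
  rw [add_dotProduct, add_dotProduct] at hyl₂
  have hrl : r ⬝ᵥ yl = r ⬝ᵥ y₁ - lam * α := by rw [hdot, hr₀]; ring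
  have hlamα : lam * α ≤ (α / β) * e := by
    have : lam * α ≤ (e / β) * α := mul_le_mul_of_nonneg_right hle hα.le
    calc lam * α ≤ (e / β) * α := this
      _ = (α / β) * e := by ring
  have hfin : r ⬝ᵥ y₁ - r ⬝ᵥ y₂ ≤ (α / β) * e + ∑ j, εr j := by linarith
  rw [dotProduct_sub, heabs, herabs]
  have h2 : (α / β) * e ≤ (2 * α / β) * e := by
    apply mul_le_mul_of_nonneg_right _ he0
    rw [div_le_div_iff₀ hβ hβ]
    nlinarith
  linarith
end

section
/- Let ȳ solve max{r̄ᵀy : y ∈ F, c̄ᵀy ≤ d componentwise} and ỹ solve max{r̃ᵀy : y ∈ F, c̃ᵀy ≤ d componentwise}, where F is a convex set of probability vectors, there are m cost vectors, and for every coordinate |r̃ − r̄| ≤ 2ε and |c̃_i − c̄_i| ≤ 2ε componentwise for ε ∈ ℝ^N, ε ≥ 0. Assume there exists y₀ ∈ F with r̄ᵀ(ȳ − y₀) = α > 0 and c̄_iᵀ(ȳ − y₀) = β > 0 for all i, and y₀ satisfies all perturbed constraints. Then r̄ᵀ(ȳ − ỹ) ≤ 2(2αm/β + 1)·‖ε‖₁.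 -/
open Matrix Finset

/-- Proposition 1 (multi-constraint pseudo-regret bound): with `m` cost constraints and
componentwise `2ε` perturbations of reward and costs, the reward gap between the nominal
optimizer `ȳ` and the perturbed optimizer `ỹ` is at most `2(2αm/β + 1)·‖ε‖₁`. -/
theorem multi_constraint_pseudo_regret
    {N m : ℕ} (rbar rtil : Fin N → ℝ) (cbar ctil : Fin m → Fin N → ℝ)
    (ε : Fin N → ℝ) (hε : ∀ j, 0 ≤ ε j) (d : Fin m → ℝ)
    (F : Set (Fin N → ℝ)) (hFconv : Convex ℝ F)
    (hFprob : ∀ y ∈ F, (∑ j, y j) = 1 ∧ ∀ j, 0 ≤ y j)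
    (hr : ∀ j, |rtil j - rbar j| ≤ 2 * ε j)
    (hc : ∀ i j, |ctil i j - cbar i j| ≤ 2 * ε j)
    (ybar : Fin N → ℝ)
    (hybar : ybar ∈ F ∧ ∀ i, cbar i ⬝ᵥ ybar ≤ d i)
    (hybarmax : ∀ y ∈ F, (∀ i, cbar i ⬝ᵥ y ≤ d i) → rbar ⬝ᵥ y ≤ rbar ⬝ᵥ ybar)
    (ytil : Fin N → ℝ)
    (hytil : ytil ∈ F ∧ ∀ i, ctil i ⬝ᵥ ytil ≤ d i)
    (hytilmax : ∀ y ∈ F, (∀ i, ctil i ⬝ᵥ y ≤ d i) → rtil ⬝ᵥ y ≤ rtil ⬝ᵥ ytil)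
    (y₀ : Fin N → ℝ) (hy₀ : y₀ ∈ F) (hy₀feas : ∀ i, ctil i ⬝ᵥ y₀ ≤ d i)
    (α β : ℝ) (hα : 0 < α) (hβ : 0 < β)
    (hrα : rbar ⬝ᵥ (ybar - y₀) = α)
    (hcβ : ∀ i, cbar i ⬝ᵥ (ybar - y₀) = β) :
    rbar ⬝ᵥ (ybar - ytil) ≤ 2 * (2 * α * m / β + 1) * ∑ j, |ε j| := by
  classical
  obtain ⟨hybarF, hybarC⟩ := hybar
  obtain ⟨hytilF, hytilC⟩ := hytil
  set E := ∑ j, ε j with hEdef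
  have hEabs : (∑ j, |ε j|) = E := Finset.sum_congr rfl fun j _ => abs_of_nonneg (hε j)
  have hE0 : 0 ≤ E := Finset.sum_nonneg fun j _ => hε j
  have hbound : ∀ y ∈ F, ∀ j, 0 ≤ y j ∧ y j ≤ 1 := by
    intro y hy j
    obtain ⟨hsum, hpos⟩ := hFprob y hy
    refine ⟨hpos j, ?_⟩
    calc y j ≤ ∑ k, y k := Finset.single_le_sum (fun k _ => hpos k) (Finset.mem_univ j)
    _ = 1 := hsum
  -- perturbation bound along a probability vector
  have hpert : ∀ (u v : Fin N → ℝ), (∀ j, |u j - v j| ≤ 2 * ε j) → ∀ y ∈ F,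
      u ⬝ᵥ y - v ⬝ᵥ y ≤ 2 * E := by
    intro u v huv y hy
    have hsplit : u ⬝ᵥ y - v ⬝ᵥ y = ∑ j, (u j - v j) * y j := by
      simp only [dotProduct, ← Finset.sum_sub_distrib, sub_mul]
    rw [hsplit, hEdef, Finset.mul_sum]
    refine Finset.sum_le_sum fun j _ => ?_
    have h1 : (u j - v j) * y j ≤ (2 * ε j) * y j :=
      mul_le_mul_of_nonneg_right ((le_abs_self _).trans (huv j)) (hbound y hy j).1
    have h2 : (2 * ε j) * y j ≤ 2 * ε j := by
      nlinarith [mul_nonneg (hε j) (sub_nonneg.mpr (hbound y hy j).2)]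
    linarith
  -- reward perturbation paired with difference of two probability vectors
  have hdiff : ∀ p ∈ F, ∀ q ∈ F,
      (∑ j, (rbar j - rtil j) * (p j - q j)) ≤ 2 * E := by
    intro p hp q hq
    rw [hEdef, Finset.mul_sum]
    refine Finset.sum_le_sum fun j _ => ?_
    have h1 : |rbar j - rtil j| ≤ 2 * ε j := by rw [abs_sub_comm]; exact hr j
    have h2 : |p j - q j| ≤ 1 := by
      rw [abs_sub_le_iff]
      constructor <;> linarith [(hbound p hp j).1, (hbound p hp j).2,
        (hbound q hq j).1, (hbound q hq j).2]
    calc (rbar j - rtil j) * (p j - q j) ≤ |rbar j - rtil j| * |p j - q j| := by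
          rw [← abs_mul]; exact le_abs_self _
      _ ≤ (2 * ε j) * 1 :=
          mul_le_mul h1 h2 (abs_nonneg _) (by linarith [hε j])
      _ = 2 * ε j := mul_one _
  -- algebraic identity
  have hid : ∀ p q : Fin N → ℝ, (∑ j, (rbar j - rtil j) * (p j - q j))
      = (rbar ⬝ᵥ p - rbar ⬝ᵥ q) - (rtil ⬝ᵥ p - rtil ⬝ᵥ q) := by
    intro p q
    have hterm : ∀ j ∈ Finset.univ, (rbar j - rtil j) * (p j - q j)
        = (rbar j * p j - rbar j * q j) - (rtil j * p j - rtil j * q j) :=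
      fun j _ => by ring
    rw [Finset.sum_congr rfl hterm, Finset.sum_sub_distrib, Finset.sum_sub_distrib,
      Finset.sum_sub_distrib]
    simp [dotProduct]
  rw [hEabs, dotProduct_sub]
  by_cases hm : m = 0
  · subst hm
    have hopt0 : rtil ⬝ᵥ ybar ≤ rtil ⬝ᵥ ytil := hytilmax ybar hybarF (fun i => i.elim0)
    have hS := hdiff ybar hybarF ytil hytilF
    rw [hid ybar ytil] at hS
    have hcast : ((0 : ℕ) : ℝ) = 0 := by norm_num
    rw [hcast]
    have hRHS : 2 * (2 * α * 0 / β + 1) * E = 2 * E := by ring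
    linarith
  · -- general case with at least one constraint
    have hm1 : (1 : ℝ) ≤ (m : ℝ) := by exact_mod_cast Nat.one_le_iff_ne_zero.2 hm
    set l := min 1 (2 * E / β) with hldef
    have hl0 : 0 ≤ l := le_min zero_le_one (div_nonneg (by linarith) hβ.le)
    have hl1 : l ≤ 1 := min_le_left _ _
    have hl2 : l ≤ 2 * E / β := min_le_right _ _
    set yl : Fin N → ℝ := (1 - l) • ybar + l • y₀ with hyldef
    have hylF : yl ∈ F := hFconv hybarF hy₀ (by linarith) hl0 (by ring)
    have hdot : ∀ v : Fin N → ℝ, v ⬝ᵥ yl = (1 - l) * (v ⬝ᵥ ybar) + l * (v ⬝ᵥ y₀) := by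
      intro v
      simp only [hyldef, dotProduct, Pi.add_apply, Pi.smul_apply, smul_eq_mul,
        Finset.mul_sum, ← Finset.sum_add_distrib]
      exact Finset.sum_congr rfl fun j _ => by ring
    have hfeas : ∀ i, ctil i ⬝ᵥ yl ≤ d i := by
      intro i
      rw [hdot (ctil i)]
      by_cases hcase : 2 * E ≤ β
      · have hleq : l = 2 * E / β := min_eq_right ((div_le_one hβ).2 hcase)
        have hlβ : l * β = 2 * E := by rw [hleq]; field_simp
        have h2 := hpert (ctil i) (cbar i) (hc i) ybar hybarF
        have h3 := hpert (ctil i) (cbar i) (hc i) y₀ hy₀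
        have h4 : cbar i ⬝ᵥ y₀ = cbar i ⬝ᵥ ybar - β := by
          have h := hcβ i; rw [dotProduct_sub] at h; linarith
        have h5 := hybarC i
        nlinarith [mul_nonneg (by linarith : (0:ℝ) ≤ 1 - l)
            (by linarith : (0:ℝ) ≤ d i + 2 * E - ctil i ⬝ᵥ ybar),
          mul_nonneg hl0
            (by linarith : (0:ℝ) ≤ d i - β + 2 * E - ctil i ⬝ᵥ y₀)]
      · have hleq : l = 1 := min_eq_left ((one_le_div hβ).2 (by linarith))
        rw [hleq]
        simpa using hy₀feas i
    have hopt : rtil ⬝ᵥ yl ≤ rtil ⬝ᵥ ytil := hytilmax yl hylF hfeas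
    have hrl : rbar ⬝ᵥ yl = rbar ⬝ᵥ ybar - l * α := by
      have hXY : rbar ⬝ᵥ y₀ = rbar ⬝ᵥ ybar - α := by
        have h := hrα; rw [dotProduct_sub] at h; linarith
      rw [hdot rbar, hXY]; ring
    have hS := hdiff yl hylF ytil hytilF
    rw [hid yl ytil] at hS
    have key : l * α + 2 * E ≤ 2 * (2 * α * m / β + 1) * E := by
      have h1 : l * α ≤ (2 * E * α) / β :=
        calc l * α ≤ 2 * E / β * α := mul_le_mul_of_nonneg_right hl2 hα.le
          _ = (2 * E * α) / β := by ring
      have h2 : (2 * E * α) / β ≤ (4 * α * (m : ℝ) * E) / β := by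
        refine (div_le_div_iff_of_pos_right hβ).mpr ?_
        nlinarith [mul_nonneg (mul_nonneg hα.le hE0)
            (by linarith : (0:ℝ) ≤ 2 * (m : ℝ) - 1)]
      have h3 : 2 * (2 * α * (m : ℝ) / β + 1) * E = (4 * α * (m : ℝ) * E) / β + 2 * E := by
        ring
      linarith
    linarith
end
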